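/- Let A be an n-ary algebra with nonzero multiplication that is both subalgebraic and an algebra of an n-linear form. Then A has zero multiplication; equivalently, the only n-ary algebra structure that is simultaneously subalgebraic and an algebra of an n-linear form is the zero multiplication. -/

import Mathlib

def Subalgebraic {k W : Type*} [Field k] [AddCommGroup W] [Module k W] {n : ℕ}
    (μ : MultilinearMap k (fun _ : Fin n => W) W) : Prop :=
  ∀ a : Fin n → W, μ a ∈ Submodule.span k (Set.range a)

/-- `μ` is an algebra of an `n`-linear form: there is a nonzero `a` such that all
products lie in `span {a}` and any product with an argument equal to `a` vanishes. -/
def IsFormAlgebra {k W : Type*} [Field k] [AddCommGroup W] [Module k W] {n : ℕ}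
    (μ : MultilinearMap k (fun _ : Fin n => W) W) : Prop :=
  ∃ a : W, a ≠ 0 ∧ (∀ x : Fin n → W, μ x ∈ Submodule.span k {a}) ∧
    (∀ x : Fin n → W, (∃ i, x i = a) → μ x = 0)

/-- an algebra that is simultaneously subalgebraic and an algebra of an
`n`-linear form has zero multiplication. -/
theorem subalgebraic_and_form_algebra_is_zero
    {k V : Type*} [Field k] [AddCommGroup V] [Module k V]
    (n : ℕ) (hn : 2 ≤ n) (μ : MultilinearMap k (fun _ : Fin n => V) V)
    (hsub : Subalgebraic μ) (hform : IsFormAlgebra μ) :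
    μ = 0 := by
  obtain ⟨a, ha, hspan, hzero⟩ := hform
  ext x
  simp only [MultilinearMap.zero_apply]
  by_contra hx
  obtain ⟨g, hg⟩ := LinearMap.exists_leftInverse_of_injective
    (LinearMap.toSpanSingleton k V a)
    (by rw [LinearMap.ker_toSpanSingleton k ha])
  have hga : g a = 1 := by
    have := LinearMap.congr_fun hg 1
    simpa [LinearMap.toSpanSingleton] using this
  set z : Fin n → V := fun i => x i - g (x i) • a with hz
  have key : ∀ s : Finset (Fin n), μ (fun i => if i ∈ s then z i else x i) = μ x := by
    intro s
    induction s using Finset.induction with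
    | empty => simp
    | @insert j s hj ih =>
      set y : Fin n → V := fun i => if i ∈ s then z i else x i with hy
      have h1 : (fun i => if i ∈ insert j s then z i else x i)
          = Function.update y j (z j) := by
        funext i
        by_cases hij : i = j
        · subst hij; simp
        · simp [Function.update_of_ne hij, hy, Finset.mem_insert, hij]
      have h2 : y j = x j := by simp [hy, hj]
      have h3 : μ (Function.update y j a) = 0 := by
        exact hzero _ ⟨j, Function.update_self _ _ _⟩
      have h4 : μ (Function.update y j (z j))
          = μ (Function.update y j (x j)) - g (x j) • μ (Function.update y j a) := by
        rw [hz]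
        rw [MultilinearMap.map_update_sub, MultilinearMap.map_update_smul]
      rw [h1, h4, h3, smul_zero, sub_zero, ← h2, Function.update_eq_self]
      exact ih
  have hμz : μ z = μ x := by simpa using key Finset.univ
  obtain ⟨c, hc⟩ := Submodule.mem_span_singleton.mp (hspan z)
  have hc0 : c ≠ 0 := by
    intro h; apply hx; rw [← hμz, ← hc, h, zero_smul]
  have haeq : a = c⁻¹ • μ z := by
    rw [← hc, smul_smul, inv_mul_cancel₀ hc0, one_smul]
  have haz : a ∈ Submodule.span k (Set.range z) := by
    rw [haeq]; exact Submodule.smul_mem _ _ (hsub z)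
  have hga0 : g a = 0 := by
    have hle : Submodule.span k (Set.range z) ≤ LinearMap.ker g := by
      rw [Submodule.span_le]
      rintro _ ⟨i, rfl⟩
      simp [hz, hga]
    exact hle haz
  rw [hga] at hga0
  exact one_ne_zero hga0
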